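/- Let q > 1 and let i be an integer with i ≥ 3. Then ∑_{j=1}^{i−1} j(i−j)(q^i − 1)/((q^j − 1)(q^{i−j} − 1)) > i(i−2)/ln q. -/

import Mathlib

open Real Finset

lemma key_exp (t : ℝ) (ht : 0 < t) : (2 - t) * Real.exp t < 2 + t := by
  have hmono : StrictMonoOn (fun t : ℝ => 2 + t - (2 - t) * Real.exp t) (Set.Ici 0) := by
    apply strictMonoOn_of_deriv_pos (convex_Ici 0)
    · fun_prop
    · intro x hx
      rw [interior_Ici] at hx
      have hd : HasDerivAt (fun t : ℝ => 2 + t - (2 - t) * Real.exp t)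
          (1 - ((-1) * Real.exp x + (2 - x) * Real.exp x)) x := by
        have h1 : HasDerivAt (fun t : ℝ => 2 - t) (-1) x := by
          simpa using (hasDerivAt_id x).const_sub 2
        have h2 := h1.mul (Real.hasDerivAt_exp x)
        have h3 : HasDerivAt (fun t : ℝ => 2 + t) 1 x := by
          simpa using (hasDerivAt_id x).const_add 2
        exact h3.sub h2
      rw [hd.deriv]
      have h5 : 1 - x < Real.exp (-x) := by
        have := Real.add_one_lt_exp (x := -x) (by simp [ne_of_gt (Set.mem_Ioi.mp hx)])
        linarith
      have h4 : (1 - x) * Real.exp x < 1 := by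
        calc (1 - x) * Real.exp x < Real.exp (-x) * Real.exp x :=
              mul_lt_mul_of_pos_right h5 (Real.exp_pos x)
          _ = 1 := by rw [← Real.exp_add]; simp
      nlinarith [Real.exp_pos x]
  have h0 := hmono Set.self_mem_Ici (Set.mem_Ici.mpr ht.le) ht
  simp only [Real.exp_zero] at h0
  nlinarith

lemma inv_exp_sub_one (t : ℝ) (ht : 0 < t) : 1 / t - 1 / 2 < 1 / (Real.exp t - 1) := by
  have he : 0 < Real.exp t - 1 := by
    have := Real.add_one_lt_exp (ne_of_gt ht)
    linarith
  rcases le_or_gt 2 t with h | h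
  · have h1 : 1 / t ≤ 1 / 2 := by
      apply one_div_le_one_div_of_le <;> linarith
    have h2 : 0 < 1 / (Real.exp t - 1) := by positivity
    linarith
  · have hk := key_exp t ht
    rw [div_sub_div _ _ (ne_of_gt ht) two_ne_zero, div_lt_div_iff₀ (by positivity) he]
    nlinarith

lemma inv_pow_sub_one (q : ℝ) (hq : 1 < q) (n : ℕ) (hn : 1 ≤ n) :
    1 / ((n : ℝ) * Real.log q) - 1 / 2 < 1 / (q ^ n - 1) := by
  have hL : 0 < Real.log q := Real.log_pos hq
  have hn' : (0 : ℝ) < n := by exact_mod_cast hn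
  have ht : 0 < (n : ℝ) * Real.log q := by positivity
  have h := inv_exp_sub_one _ ht
  rwa [Real.exp_nat_mul, Real.exp_log (by linarith : (0:ℝ) < q)] at h

/-- For `q > 1` and an integer `i ≥ 3`,
`∑_{j=1}^{i−1} j(i−j)(qⁱ − 1)/((qʲ − 1)(q^{i−j} − 1)) > i(i−2)/ln q`. -/
theorem sum_gt (q : ℝ) (hq : 1 < q) (i : ℕ) (hi : 3 ≤ i) :
    (i : ℝ) * ((i : ℝ) - 2) / Real.log q <
      ∑ j ∈ Finset.Icc 1 (i - 1),
        (j : ℝ) * ((i : ℝ) - (j : ℝ)) * (q ^ i - 1) /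
          ((q ^ j - 1) * (q ^ (i - j) - 1)) := by
  have hL : 0 < Real.log q := Real.log_pos hq
  have hq0 : (0:ℝ) < q := by linarith
  set L := Real.log q with hLdef
  -- each term is > i / L
  have hterm : ∀ j ∈ Finset.Icc 1 (i - 1),
      (i : ℝ) / L < (j : ℝ) * ((i : ℝ) - (j : ℝ)) * (q ^ i - 1) /
        ((q ^ j - 1) * (q ^ (i - j) - 1)) := by
    intro j hj
    rw [Finset.mem_Icc] at hj
    obtain ⟨hj1, hj2⟩ := hj
    have hji : j < i := lt_of_le_of_lt hj2 (by omega)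
    have hk1 : 1 ≤ i - j := by omega
    have hK : ((i - j : ℕ) : ℝ) = (i : ℝ) - (j : ℝ) := by
      push_cast [Nat.cast_sub hji.le]; ring
    set J : ℝ := (j : ℝ) with hJdef
    set K : ℝ := ((i - j : ℕ) : ℝ) with hKdef
    have hJ1 : (1:ℝ) ≤ J := Nat.one_le_cast.mpr hj1
    have hK1 : (1:ℝ) ≤ K := Nat.one_le_cast.mpr hk1
    have ha : (0:ℝ) < q ^ j - 1 := by
      have := one_lt_pow₀ hq (by omega : j ≠ 0); linarith
    have hb : (0:ℝ) < q ^ (i - j) - 1 := by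
      have := one_lt_pow₀ hq (by omega : i - j ≠ 0); linarith
    set a : ℝ := q ^ j - 1 with hadef
    set b : ℝ := q ^ (i - j) - 1 with hbdef
    have hident : q ^ i - 1 = a * b + a + b := by
      have : q ^ j * q ^ (i - j) = q ^ i := by
        rw [← pow_add]; congr 1; omega
      simp only [hadef, hbdef]; nlinarith [this]
    have hia : 1 / (J * L) - 1 / 2 < 1 / a := inv_pow_sub_one q hq j hj1
    have hib : 1 / (K * L) - 1 / 2 < 1 / b := inv_pow_sub_one q hq (i - j) hk1
    have hJK : (0:ℝ) < J * K := by nlinarith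
    have e1 : J * K * (q ^ i - 1) / (a * b) = J * K + J * K * (1 / a) + J * K * (1 / b) := by
      rw [hident]; field_simp; ring
    have h1 : K / L - J * K / 2 < J * K * (1 / a) := by
      calc K / L - J * K / 2 = J * K * (1 / (J * L) - 1 / 2) := by
            field_simp
        _ < J * K * (1 / a) := by
            exact mul_lt_mul_of_pos_left hia hJK
    have h2 : J / L - J * K / 2 < J * K * (1 / b) := by
      calc J / L - J * K / 2 = J * K * (1 / (K * L) - 1 / 2) := by
            field_simp
        _ < J * K * (1 / b) := by
            exact mul_lt_mul_of_pos_left hib hJK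
    have hiJK : (i : ℝ) = J + K := by rw [hK]; ring
    have hiL : (i : ℝ) / L = J / L + K / L := by rw [hiJK, add_div]
    have hgoal : (i : ℝ) / L < J * K * (q ^ i - 1) / (a * b) := by
      rw [e1]; linarith
    calc (i : ℝ) / L < J * K * (q ^ i - 1) / (a * b) := hgoal
      _ = J * ((i : ℝ) - J) * (q ^ i - 1) / (a * b) := by rw [hK]
  have hne : (Finset.Icc 1 (i - 1)).Nonempty := by
    rw [Finset.nonempty_Icc]; omega
  have hsum := Finset.sum_lt_sum_of_nonempty hne hterm
  rw [Finset.sum_const] at hsum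
  have hcard : (Finset.Icc 1 (i - 1)).card = i - 1 := by
    rw [Nat.card_Icc]; omega
  rw [hcard] at hsum
  have hc : ((i - 1 : ℕ) : ℝ) = (i : ℝ) - 1 := by
    push_cast [Nat.cast_sub (by omega : 1 ≤ i)]; ring
  have hi3 : (3:ℝ) ≤ (i:ℝ) := by exact_mod_cast hi
  rw [nsmul_eq_mul, hc] at hsum
  have hfin : (i : ℝ) * ((i : ℝ) - 2) / L < (((i:ℝ) - 1) * (i : ℝ)) / L := by
    rw [div_lt_div_iff₀ hL hL]
    nlinarith
  have heq : ((i:ℝ) - 1) * ((i : ℝ) / L) = (((i:ℝ) - 1) * (i : ℝ)) / L := by ring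
  linarith [hsum, hfin, heq.symm ▸ hsum]
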